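/- A subset e' of Δ belongs to 𝔖^⊥ if and only if there are finitely many simple terms s₁,…,sₙ such that e' ⊆ ↑s₁ ∪ ⋯ ∪ ↑sₙ. -/
import Mathlib


inductive RT : Type
  | var : ℕ → RT
  | lam : ℕ → RT → RT
  | app : RT → List RT → RT

noncomputable instance : DecidableEq RT := Classical.decEq _

namespace Resource

mutual
def size : RT → ℕ
  | .var _ => 1
  | .lam _ s => 1 + size s
  | .app s S => 1 + size s + sizeP S
def sizeP : List RT → ℕ
  | [] => 0
  | t :: T => size t + sizeP T
end

mutual
def fv : RT → Finset ℕ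
  | .var x => {x}
  | .lam x s => (fv s).erase x
  | .app s S => fv s ∪ fvP S
def fvP : List RT → Finset ℕ
  | [] => ∅
  | t :: T => fv t ∪ fvP T
end

mutual
def fc : RT → ℕ → ℕ
  | .var y, x => if y = x then 1 else 0
  | .lam y s, x => if y = x then 0 else fc s x
  | .app s S, x => fc s x + fcP S x
def fcP : List RT → ℕ → ℕ
  | [], _ => 0
  | t :: T, x => fc t x + fcP T x
end

mutual
def subst : RT → ℕ → RT → RT
  | .var y, x, t => if y = x then t else .var y
  | .lam y s, x, t => if y = x then .lam y s else .lam y (subst s x t)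
  | .app s S, x, t => .app (subst s x t) (substP S x t)
def substP : List RT → ℕ → RT → List RT
  | [], _, _ => []
  | u :: T, x, t => subst u x t :: substP T x t
end

def splits : List RT → List (List RT × List RT)
  | [] => [([], [])]
  | a :: l => (splits l).flatMap fun p => [(a :: p.1, p.2), (p.1, a :: p.2)]

mutual
def dsubst : RT → ℕ → List RT → Multiset RT
  | .var y, x, S =>
      if y = x then (match S with | [t] => {t} | _ => 0)
      else if S.isEmpty then {RT.var y} else 0
  | .lam y s, x, S =>
      if y = x then (if S.isEmpty then {RT.lam y s} else 0)
      else (dsubst s x S).map (RT.lam y)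
  | .app s T, x, S =>
      ((splits S).map fun p =>
        (dsubst s x p.1).bind fun s' =>
          (dsubstP T x p.2).map fun T' => RT.app s' T').sum
def dsubstP : List RT → ℕ → List RT → Multiset (List RT)
  | [], _, S => if S.isEmpty then {([] : List RT)} else 0
  | t :: T, x, S =>
      ((splits S).map fun p =>
        (dsubst t x p.1).bind fun t' =>
          (dsubstP T x p.2).map fun T' => t' :: T').sum
end

mutual
inductive Red1 : RT → Multiset RT → Prop
  | beta (x : ℕ) (s : RT) (S : List RT) : Red1 (.app (.lam x s) S) (dsubst s x S)
  | lam (x : ℕ) {s : RT} {a : Multiset RT} : Red1 s a → Red1 (.lam x s) (a.map (RT.lam x))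
  | appL {s : RT} {a : Multiset RT} (S : List RT) :
      Red1 s a → Red1 (.app s S) (a.map fun u => RT.app u S)
  | appR (s : RT) {S : List RT} {A : Multiset (List RT)} :
      Red1P S A → Red1 (.app s S) (A.map fun T => RT.app s T)
inductive Red1P : List RT → Multiset (List RT) → Prop
  | head {t : RT} {b : Multiset RT} (T : List RT) :
      Red1 t b → Red1P (t :: T) (b.map fun u => u :: T)
  | tail (t : RT) {T : List RT} {B : Multiset (List RT)} :
      Red1P T B → Red1P (t :: T) (B.map fun T' => t :: T')
end

def NLift {α β : Type*} (ρ : α → Multiset β → Prop) (a : Multiset α) (b : Multiset β) : Prop :=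
  ∃ l : List (α × Multiset β), (∀ p ∈ l, ρ p.1 p.2) ∧
    a = (l.map Prod.fst : List α) ∧ b = (l.map Prod.snd).sum

def Red1R (s : RT) (b : Multiset RT) : Prop := b = {s} ∨ Red1 s b

def Red : Multiset RT → Multiset RT → Prop := Relation.TransGen (NLift Red1R)

def rle (t s : RT) : Prop := ∃ a, Red {s} a ∧ t ∈ a

def above (s : RT) : Set RT := {t | rle s t}

def Red1RP (S : List RT) (B : Multiset (List RT)) : Prop := B = {S} ∨ Red1P S B

def RedP : Multiset (List RT) → Multiset (List RT) → Prop := Relation.TransGen (NLift Red1RP)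

def plep (T S : List RT) : Prop := ∃ A, RedP {S} A ∧ T ∈ A





def orth {I : Type*} (F : Set (Set I)) : Set (Set I) := {e' | ∀ e ∈ F, (e ∩ e').Finite}

structure FinSpace (I : Type*) where
  F : Set (Set I)
  biorth : orth (orth F) ⊆ F

lemma subset_biorth {I : Type*} (G : Set (Set I)) : G ⊆ orth (orth G) := by
  intro e he g hg
  have := hg e he
  rwa [Set.inter_comm] at this

lemma orth_anti {I : Type*} {G H : Set (Set I)} (h : G ⊆ H) : orth H ⊆ orth G :=
  fun g hg e he => hg e (h he)

def FinSpace.ofOrth {I : Type*} (G : Set (Set I)) : FinSpace I :=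
  ⟨orth G, orth_anti (subset_biorth G)⟩

lemma FinSpace.empty_mem {I : Type*} (X : FinSpace I) : ∅ ∈ X.F :=
  X.biorth (fun g _ => by simp)

lemma FinSpace.mem_of_subset {I : Type*} (X : FinSpace I) {e f : Set I}
    (he : e ∈ X.F) (h : f ⊆ e) : f ∈ X.F := by
  refine X.biorth (fun g hg => ?_)
  exact ((hg e he).subset (fun x hx => ⟨h hx.2, hx.1⟩))

lemma FinSpace.union_mem {I : Type*} (X : FinSpace I) {e f : Set I}
    (he : e ∈ X.F) (hf : f ∈ X.F) : e ∪ f ∈ X.F := by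
  refine X.biorth (fun g hg => ?_)
  have h1 := hg e he
  have h2 := hg f hf
  rw [Set.inter_comm] at h1 h2
  rw [Set.inter_union_distrib_left]
  exact h1.union h2

def fsSub (k : Type*) [Field k] {I : Type*} (X : FinSpace I) : Submodule k (I → k) where
  carrier := {a | {s | a s ≠ 0} ∈ X.F}
  add_mem' := by
    intro a b ha hb
    refine X.mem_of_subset (X.union_mem ha hb) ?_
    intro s hs
    by_contra h
    simp only [Set.mem_union, Set.mem_setOf_eq, not_or, not_not] at h
    exact hs (by simp [Pi.add_apply, h.1, h.2])
  zero_mem' := by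
    refine X.mem_of_subset X.empty_mem ?_
    intro s hs
    simp at hs
  smul_mem' := by
    intro c a ha
    refine X.mem_of_subset ha ?_
    intro s hs
    by_contra h
    simp only [Set.mem_setOf_eq, not_not] at h
    exact hs (by simp [Pi.smul_apply, h])

def fsTop (k : Type*) [Field k] {I : Type*} (X : FinSpace I) :
    TopologicalSpace (fsSub k X) where
  IsOpen U := ∀ a ∈ U, ∃ e' ∈ orth X.F, ∀ b : fsSub k X, (∀ s ∈ e', b.1 s = a.1 s) → b ∈ U
  isOpen_univ := by
    intro a _
    exact ⟨∅, fun e _ => by simp, fun b _ => trivial⟩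
  isOpen_inter := by
    rintro U V hU hV a ⟨haU, haV⟩
    obtain ⟨e₁, he₁, h₁⟩ := hU a haU
    obtain ⟨e₂, he₂, h₂⟩ := hV a haV
    refine ⟨e₁ ∪ e₂, fun e he => ?_, fun b hb => ?_⟩
    · rw [Set.inter_union_distrib_left]
      exact (he₁ e he).union (he₂ e he)
    · exact ⟨h₁ b (fun s hs => hb s (Or.inl hs)), h₂ b (fun s hs => hb s (Or.inr hs))⟩
  isOpen_sUnion := by
    rintro 𝒮 h a ⟨U, hU, haU⟩
    obtain ⟨e', he', hb⟩ := h U hU a haU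
    exact ⟨e', he', fun b hbs => ⟨U, hU, hb b hbs⟩⟩



def Sfin : Set (Set RT) := orth (Set.range above)

def SfinSpace : FinSpace RT := FinSpace.ofOrth (Set.range above)

def SS : Set (Set RT) := {e' | ∀ ξ : Finset ℕ, {s ∈ e' | fv s ⊆ ξ}.Finite}

def Sfv : Set (Set RT) := orth (Set.range above ∪ SS)

def bang (e : Set RT) : Set (List RT) := {S | ∀ t ∈ S, t ∈ e}

def appSet (g : Set RT) (E : Set (List RT)) : Set RT :=
  {u | ∃ t ∈ g, ∃ S ∈ E, u = RT.app t S}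

def lamSet (x : ℕ) (g : Set RT) : Set RT := {u | ∃ s ∈ g, u = RT.lam x s}

def appMany (g : Set RT) (Es : List (Set (List RT))) : Set RT := Es.foldl appSet g

def dsubstSet (g : Set RT) (x : ℕ) (E : Set (List RT)) : Set RT :=
  {t | ∃ s ∈ g, ∃ S ∈ E, t ∈ dsubst s x S}

def IsDFS (W : Set RT) (F : Set (Set RT)) : Prop :=
  (∀ e ∈ F, e ⊆ W) ∧ ∀ e : Set RT, e ⊆ W → e ∈ orth (orth F) → e ∈ F

def SaturatedP (W : Set RT) (F : Set (Set RT)) : Prop :=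
  (∀ (x : ℕ) (es : List (Set RT)), (∀ e ∈ es, e ∈ Sfv) →
      appMany {RT.var x} (es.map bang) ∈ F) ∧
  F ⊆ Sfv ∧
  (∀ (x : ℕ) (g e : Set RT) (es : List (Set RT)), g ∈ Sfv → e ∈ Sfv →
      (∀ e' ∈ es, e' ∈ Sfv) →
      appMany (dsubstSet g x (bang e)) (es.map bang) ∈ F →
      appMany (appSet (lamSet x g) (bang e)) (es.map bang) ∈ F)

abbrev FP := Set RT × Set (Set RT)

def SatFP (X : FP) : Prop := IsDFS X.1 X.2 ∧ SaturatedP X.1 X.2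

def implWeb (FX FY : Set (Set RT)) : Set RT :=
  {t | ∀ e ∈ FX, appSet {t} (bang e) ∈ FY}

def implF (FX FY : Set (Set RT)) : Set (Set RT) :=
  {g | g ⊆ implWeb FX FY ∧ ∀ e ∈ FX, appSet g (bang e) ∈ FY}

def implFP (X Y : FP) : FP := (implWeb X.2 Y.2, implF X.2 Y.2)

def preimpl (e : Set RT) (f' : Set RT) : Set RT :=
  {t | (appSet {t} (bang e) ∩ f').Nonempty}

def pdsubstSet (f : Set RT) (l : List (ℕ × Set (List RT))) : Set RT :=
  l.foldl (fun g p => dsubstSet g p.1 p.2) f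

inductive ALam (k : Type) : Type
  | var : ℕ → ALam k
  | lam : ℕ → ALam k → ALam k
  | app : ALam k → List (k × ALam k) → ALam k

variable {k : Type} [Field k]

mutual
def taylor : ALam k → RT → k
  | .var x, .var y => if x = y then 1 else 0
  | .var _, _ => 0
  | .lam x M, .lam y s => if x = y then taylor M s else 0
  | .lam _ _, _ => 0
  | .app M Q, .app t T =>
      taylor M t * ((Nat.factorial T.length : ℕ) : k)⁻¹ * (T.map fun u => taylorQ Q u).prod
  | .app _ _, _ => 0
def taylorQ : List (k × ALam k) → RT → k
  | [], _ => 0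
  | (α, N) :: Q, u => α * taylor N u + taylorQ Q u
end

mutual
inductive InShape : ALam k → RT → Prop
  | var (x : ℕ) : InShape (.var x) (.var x)
  | lam (x : ℕ) {M : ALam k} {s : RT} : InShape M s → InShape (.lam x M) (.lam x s)
  | app {M : ALam k} {Q : List (k × ALam k)} {s : RT} {T : List RT} :
      InShape M s → (∀ u ∈ T, InShapeQ Q u) →
      InShape (.app M Q) (.app s T)
inductive InShapeQ : List (k × ALam k) → RT → Prop
  | head {α : k} {N : ALam k} (Q : List (k × ALam k)) {u : RT} :
      InShape N u → InShapeQ ((α, N) :: Q) u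
  | tail (p : k × ALam k) {Q : List (k × ALam k)} {u : RT} :
      InShapeQ Q u → InShapeQ (p :: Q) u
end

inductive Ty : Type
  | var : ℕ → Ty
  | arrow : Ty → Ty → Ty
  | all : ℕ → Ty → Ty

def tyFV : Ty → Finset ℕ
  | .var φ => {φ}
  | .arrow A B => tyFV A ∪ tyFV B
  | .all φ A => (tyFV A).erase φ

def substTy : Ty → ℕ → Ty → Ty
  | .var ψ, φ, B => if ψ = φ then B else .var ψ
  | .arrow A C, φ, B => .arrow (substTy A φ B) (substTy C φ B)
  | .all ψ A, φ, B => if ψ = φ then .all ψ A else .all ψ (substTy A φ B)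

inductive HasTy : List (ℕ × Ty) → ALam k → Ty → Prop
  | var (Γ : List (ℕ × Ty)) (x : ℕ) (A : Ty) :
      List.lookup x Γ = some A → HasTy Γ (.var x) A
  | abs {Γ : List (ℕ × Ty)} {x : ℕ} {M : ALam k} {A B : Ty} :
      HasTy ((x, A) :: Γ) M B → HasTy Γ (.lam x M) (.arrow A B)
  | app {Γ : List (ℕ × Ty)} {M : ALam k} {Q : List (k × ALam k)} {A B : Ty} :
      HasTy Γ M (.arrow A B) → (∀ p ∈ Q, HasTy Γ p.2 A) → HasTy Γ (.app M Q) B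
  | inst {Γ : List (ℕ × Ty)} {M : ALam k} {φ : ℕ} {A : Ty} (B : Ty) :
      HasTy Γ M (.all φ A) → HasTy Γ M (substTy A φ B)
  | gen {Γ : List (ℕ × Ty)} {M : ALam k} {φ : ℕ} {A : Ty} :
      HasTy Γ M A → (∀ p ∈ Γ, φ ∉ tyFV p.2) → HasTy Γ M (.all φ A)



def interp (I : ℕ → FP) : Ty → FP
  | .var φ => I φ
  | .arrow A B => implFP (interp I A) (interp I B)
  | .all φ A =>
      (⋂ (X : FP) (_ : SatFP X), (interp (Function.update I φ X) A).1,
       {e | (e ⊆ ⋂ (X : FP) (_ : SatFP X), (interp (Function.update I φ X) A).1) ∧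
            ∀ X : FP, SatFP X → e ∈ (interp (Function.update I φ X) A).2})



/-! ### Auxiliary lemmas for statement8 -/

lemma size_pos : ∀ u : RT, 1 ≤ size u
  | .var _ => by simp [size]
  | .lam _ s => by simp [size]
  | .app s S => by simp [size]; omega

mutual
def allv : RT → Finset ℕ
  | .var x => {x}
  | .lam x s => insert x (allv s)
  | .app s S => allv s ∪ allvP S
def allvP : List RT → Finset ℕ
  | [] => ∅
  | t :: T => allv t ∪ allvP T
end

lemma mem_listSum {α : Type*} {l : List (Multiset α)} {a : α} :
    a ∈ l.sum ↔ ∃ m ∈ l, a ∈ m := by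
  induction l with
  | nil => simp
  | cons h t ih => simp [ih]

lemma splits_spec : ∀ (S : List RT) (p : List RT × List RT), p ∈ splits S →
    sizeP p.1 + sizeP p.2 = sizeP S ∧ allvP p.1 ∪ allvP p.2 = allvP S := by
  intro S
  induction S with
  | nil =>
    intro p hp
    simp only [splits, List.mem_singleton] at hp
    subst hp; simp [sizeP, allvP]
  | cons a l ih =>
    intro p hp
    simp only [splits, List.mem_flatMap, List.mem_cons, List.mem_singleton,
      List.not_mem_nil, or_false] at hp
    obtain ⟨q, hq, hp⟩ := hp
    obtain ⟨h1, h2⟩ := ih q hq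
    rcases hp with hp | hp <;> subst hp <;>
      refine ⟨by simp only [sizeP]; omega, ?_⟩ <;>
      · ext y
        simp only [allvP, Finset.mem_union, Finset.mem_insert] at *
        have := Finset.ext_iff.mp h2 y
        simp only [Finset.mem_union] at this
        tauto

mutual
theorem dsubst_bound : ∀ (s : RT) (x : ℕ) (S : List RT), ∀ u ∈ dsubst s x S,
    size u ≤ size s + sizeP S ∧ allv u ⊆ allv s ∪ allvP S
  | .var y, x, S => by
    intro u hu
    by_cases h : y = x
    · simp only [dsubst, h, if_pos rfl] at hu
      match S with
      | [] => simp at hu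
      | [t] =>
        simp at hu
        subst hu
        exact ⟨by simp [size, sizeP] <;> omega, by intro z hz; simp [allvP]; tauto⟩
      | t :: t' :: S => simp at hu
    · simp only [dsubst, if_neg h] at hu
      match S with
      | [] =>
        simp at hu
        subst hu
        exact ⟨by simp [sizeP], by simp [allvP]⟩
      | t :: S => simp at hu
  | .lam y s, x, S => by
    intro u hu
    by_cases h : y = x
    · subst h
      simp only [dsubst, if_pos rfl] at hu
      match S with
      | [] =>
        simp at hu
        subst hu
        exact ⟨by simp [sizeP], by simp [allvP]⟩
      | t :: S => simp at hu
    · simp only [dsubst, if_neg h, Multiset.mem_map] at hu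
      obtain ⟨v, hv, rfl⟩ := hu
      obtain ⟨h1, h2⟩ := dsubst_bound s x S v hv
      refine ⟨by simp only [size]; omega, ?_⟩
      intro z hz
      simp only [allv, Finset.mem_union, Finset.mem_insert] at *
      rcases hz with rfl | hz
      · tauto
      · have := h2 hz
        simp only [Finset.mem_union] at this
        tauto
  | .app s T, x, S => by
    intro u hu
    simp only [dsubst] at hu
    rw [mem_listSum] at hu
    obtain ⟨m, hm, hum⟩ := hu
    rw [List.mem_map] at hm
    obtain ⟨p, hp, rfl⟩ := hm
    rw [Multiset.mem_bind] at hum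
    obtain ⟨s', hs', hum⟩ := hum
    rw [Multiset.mem_map] at hum
    obtain ⟨T', hT', rfl⟩ := hum
    obtain ⟨hs1, hs2⟩ := splits_spec S p hp
    obtain ⟨h1, h2⟩ := dsubst_bound s x p.1 s' hs'
    obtain ⟨h3, h4⟩ := dsubstP_bound T x p.2 T' hT'
    refine ⟨by simp only [size]; omega, ?_⟩
    intro z hz
    have e2 := Finset.ext_iff.mp hs2 z
    simp only [allv, Finset.mem_union] at *
    rcases hz with hz | hz
    · have := h2 hz; simp only [Finset.mem_union] at this; tauto
    · have := h4 hz; simp only [Finset.mem_union] at this; tauto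
theorem dsubstP_bound : ∀ (T : List RT) (x : ℕ) (S : List RT), ∀ U ∈ dsubstP T x S,
    sizeP U ≤ sizeP T + sizeP S ∧ allvP U ⊆ allvP T ∪ allvP S
  | [], x, S => by
    intro U hU
    match S with
    | [] =>
      simp [dsubstP] at hU
      subst hU
      exact ⟨by simp [sizeP], by simp [allvP]⟩
    | t :: S => simp [dsubstP] at hU
  | t :: T, x, S => by
    intro U hU
    simp only [dsubstP] at hU
    rw [mem_listSum] at hU
    obtain ⟨m, hm, hUm⟩ := hU
    rw [List.mem_map] at hm
    obtain ⟨p, hp, rfl⟩ := hm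
    rw [Multiset.mem_bind] at hUm
    obtain ⟨t', ht', hUm⟩ := hUm
    rw [Multiset.mem_map] at hUm
    obtain ⟨T', hT', rfl⟩ := hUm
    obtain ⟨hs1, hs2⟩ := splits_spec S p hp
    obtain ⟨h1, h2⟩ := dsubst_bound t x p.1 t' ht'
    obtain ⟨h3, h4⟩ := dsubstP_bound T x p.2 T' hT'
    refine ⟨by simp only [sizeP]; omega, ?_⟩
    intro z hz
    have e2 := Finset.ext_iff.mp hs2 z
    simp only [allvP, Finset.mem_union] at *
    rcases hz with hz | hz
    · have := h2 hz; simp only [Finset.mem_union] at this; tauto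
    · have := h4 hz; simp only [Finset.mem_union] at this; tauto
end

theorem red1_bound {t : RT} {a : Multiset RT} (h : Red1 t a) :
    ∀ u ∈ a, size u ≤ size t ∧ allv u ⊆ allv t := by
  induction h using Red1.rec
    (motive_2 := fun T A _ => ∀ U ∈ A, sizeP U ≤ sizeP T ∧ allvP U ⊆ allvP T) with
  | beta x s S =>
    intro u hu
    obtain ⟨h1, h2⟩ := dsubst_bound s x S u hu
    refine ⟨by simp only [size] at *; omega, ?_⟩
    intro z hz
    have := h2 hz
    simp only [allv, Finset.mem_union, Finset.mem_insert] at *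
    tauto
  | lam x h ih =>
    intro u hu
    rw [Multiset.mem_map] at hu
    obtain ⟨v, hv, rfl⟩ := hu
    obtain ⟨h1, h2⟩ := ih v hv
    refine ⟨by simp only [size]; omega, ?_⟩
    intro z hz
    simp only [allv, Finset.mem_insert] at *
    rcases hz with rfl | hz
    · tauto
    · exact Or.inr (h2 hz)
  | appL S h ih =>
    intro u hu
    rw [Multiset.mem_map] at hu
    obtain ⟨v, hv, rfl⟩ := hu
    obtain ⟨h1, h2⟩ := ih v hv
    refine ⟨by simp only [size]; omega, ?_⟩
    intro z hz
    simp only [allv, Finset.mem_union] at *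
    rcases hz with hz | hz
    · exact Or.inl (h2 hz)
    · exact Or.inr hz
  | appR s h ih =>
    intro u hu
    rw [Multiset.mem_map] at hu
    obtain ⟨T', hT', rfl⟩ := hu
    obtain ⟨h1, h2⟩ := ih T' hT'
    refine ⟨by simp only [size]; omega, ?_⟩
    intro z hz
    simp only [allv, Finset.mem_union] at *
    rcases hz with hz | hz
    · exact Or.inl hz
    · exact Or.inr (h2 hz)
  | head T h ih =>
    rename_i U hU
    rw [Multiset.mem_map] at hU
    obtain ⟨v, hv, rfl⟩ := hU
    obtain ⟨h1, h2⟩ := ih v hv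
    refine ⟨by simp only [sizeP]; omega, ?_⟩
    intro z hz
    simp only [allvP, Finset.mem_union] at *
    rcases hz with hz | hz
    · exact Or.inl (h2 hz)
    · exact Or.inr hz
  | tail t h ih =>
    rename_i U hU
    rw [Multiset.mem_map] at hU
    obtain ⟨T', hT', rfl⟩ := hU
    obtain ⟨h1, h2⟩ := ih T' hT'
    refine ⟨by simp only [sizeP]; omega, ?_⟩
    intro z hz
    simp only [allvP, Finset.mem_union] at *
    rcases hz with hz | hz
    · exact Or.inl hz
    · exact Or.inr (h2 hz)

lemma nlift_bound {a b : Multiset RT} (h : NLift Red1R a b) :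
    ∀ u ∈ b, ∃ v ∈ a, size u ≤ size v ∧ allv u ⊆ allv v := by
  obtain ⟨l, hl, ha, hb⟩ := h
  intro u hu
  rw [hb, mem_listSum] at hu
  obtain ⟨m, hm, hum⟩ := hu
  rw [List.mem_map] at hm
  obtain ⟨p, hp, rfl⟩ := hm
  refine ⟨p.1, by rw [ha]; exact Multiset.mem_coe.mpr (List.mem_map.mpr ⟨p, hp, rfl⟩), ?_⟩
  rcases hl p hp with h1 | h1
  · rw [h1, Multiset.mem_singleton] at hum
    subst hum
    exact ⟨le_refl _, subset_rfl⟩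
  · exact red1_bound h1 u hum

lemma red_bound {a b : Multiset RT} (h : Red a b) :
    ∀ u ∈ b, ∃ v ∈ a, size u ≤ size v ∧ allv u ⊆ allv v := by
  induction h with
  | single h => exact nlift_bound h
  | tail _ h ih =>
    intro u hu
    obtain ⟨v, hv, h1, h2⟩ := nlift_bound h u hu
    obtain ⟨w, hw, h3, h4⟩ := ih v hv
    exact ⟨w, hw, le_trans h1 h3, subset_trans h2 h4⟩

lemma rle_bound {s t : RT} (h : rle s t) : size s ≤ size t ∧ allv s ⊆ allv t := by
  obtain ⟨a, hred, hmem⟩ := h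
  obtain ⟨v, hv, h1, h2⟩ := red_bound hred s hmem
  rw [Multiset.mem_singleton] at hv
  subst hv
  exact ⟨h1, h2⟩

lemma rle_refl (t : RT) : rle t t :=
  ⟨{t}, Relation.TransGen.single ⟨[(t, {t})], by
    intro p hp; simp at hp; subst hp; exact Or.inl rfl, by simp, by simp⟩, by simp⟩

lemma bounded_finite (ξ : Finset ℕ) : ∀ n : ℕ,
    {u : RT | size u ≤ n ∧ allv u ⊆ ξ}.Finite ∧
    {T : List RT | sizeP T ≤ n ∧ allvP T ⊆ ξ}.Finite := by
  intro n
  induction n with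
  | zero =>
    constructor
    · apply Set.Finite.subset (Set.finite_empty)
      rintro u ⟨h1, -⟩
      have := size_pos u
      omega
    · apply Set.Finite.subset (Set.finite_singleton [])
      rintro T ⟨h1, -⟩
      match T with
      | [] => rfl
      | t :: T => exfalso; have := size_pos t; simp [sizeP] at h1; omega
  | succ n ih =>
    have hT : {u : RT | size u ≤ n + 1 ∧ allv u ⊆ ξ}.Finite := by
      apply Set.Finite.subset
        (((ξ.finite_toSet.image RT.var).union
          ((ξ.finite_toSet.prod ih.1).image fun p => RT.lam p.1 p.2)).union
          ((ih.1.prod ih.2).image fun p => RT.app p.1 p.2))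
      rintro u ⟨h1, h2⟩
      match u with
      | .var y =>
        refine Or.inl (Or.inl ⟨y, ?_, rfl⟩)
        have := h2 (by simp [allv] : y ∈ allv (RT.var y))
        exact this
      | .lam y s =>
        refine Or.inl (Or.inr ⟨(y, s), ⟨?_, ?_, ?_⟩, rfl⟩)
        · exact h2 (by simp [allv])
        · show size s ≤ n; simp only [size] at h1; omega
        · intro z hz; exact h2 (by simp [allv]; tauto)
      | .app s T =>
        refine Or.inr ⟨(s, T), ⟨⟨?_, ?_⟩, ?_, ?_⟩, rfl⟩
        · show size s ≤ n; simp only [size] at h1; omega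
        · intro z hz; exact h2 (by simp [allv]; tauto)
        · show sizeP T ≤ n; simp only [size] at h1; omega
        · intro z hz; exact h2 (by simp [allv]; tauto)
    refine ⟨hT, ?_⟩
    apply Set.Finite.subset ((hT.prod ih.2).image (fun p => p.1 :: p.2) |>.insert [])
    rintro T ⟨h1, h2⟩
    match T with
    | [] => exact Or.inl rfl
    | t :: T =>
      refine Or.inr ⟨(t, T), ⟨⟨?_, ?_⟩, ?_, ?_⟩, rfl⟩
      · show size t ≤ n + 1; simp only [sizeP] at h1; have := size_pos t; omega
      · intro z hz; exact h2 (by simp [allvP]; tauto)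
      · show sizeP T ≤ n; simp only [sizeP] at h1; have := size_pos t; omega
      · intro z hz; exact h2 (by simp [allvP]; tauto)

lemma reducts_finite (t : RT) : {s | rle s t}.Finite := by
  apply Set.Finite.subset ((bounded_finite (allv t) (size t)).1)
  intro s hs
  exact rle_bound hs

theorem statement8 (e' : Set RT) :
    e' ∈ orth Sfin ↔ ∃ L : Finset RT, e' ⊆ ⋃ s ∈ L, above s := by
  constructor
  · intro h
    by_contra hc
    push_neg at hc
    have hex : ∀ L : Finset RT, ∃ u ∈ e', ∀ s ∈ L, ¬ rle s u := by
      intro L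
      obtain ⟨u, hu, hnot⟩ := Set.not_subset.mp (hc L)
      refine ⟨u, hu, fun s hs hr => hnot ?_⟩
      exact Set.mem_biUnion hs hr
    choose F hF1 hF2 using hex
    let g : ℕ → Finset RT := fun n =>
      Nat.rec (∅ : Finset RT) (fun _ G => G ∪ (reducts_finite (F G)).toFinset) n
    let f : ℕ → RT := fun n => F (g n)
    have hg : ∀ n, g (n + 1) = g n ∪ (reducts_finite (f n)).toFinset := fun n => rfl
    have hmono : ∀ m n, m ≤ n → g m ⊆ g n := by
      have hstep : ∀ n, g n ≤ g (n + 1) := fun n => by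
        rw [hg]; exact Finset.subset_union_left
      exact fun m n hmn => monotone_nat_of_le_succ hstep hmn
    have key : ∀ m n, m < n → ∀ s, rle s (f m) → ¬ rle s (f n) := by
      intro m n hmn s hsm
      have hsg : s ∈ g n := by
        apply hmono (m + 1) n hmn
        rw [hg]
        exact Finset.mem_union_right _ ((reducts_finite (f m)).mem_toFinset.mpr hsm)
      exact hF2 (g n) s hsg
    have hinj : Function.Injective f := by
      intro m n hmn
      by_contra hne
      rcases Nat.lt_or_ge m n with h' | h'
      · exact key m n h' (f m) (rle_refl _) (hmn ▸ rle_refl (f m))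
      · have h'' : n < m := by omega
        exact key n m h'' (f n) (rle_refl _) (hmn ▸ rle_refl (f n))
    have hSfin : Set.range f ∈ Sfin := by
      rintro e ⟨s, rfl⟩
      apply Set.Subsingleton.finite
      rintro u ⟨hu1, m, rfl⟩ v ⟨hv1, n, rfl⟩
      by_contra hne
      have hmn : m ≠ n := fun hh => hne (by rw [hh])
      rcases Nat.lt_or_ge m n with h' | h'
      · exact key m n h' s hu1 hv1
      · exact key n m (by omega) s hv1 hu1
    have hfin : (Set.range f ∩ e').Finite := h _ hSfin
    have : (Set.range f).Finite := by
      apply hfin.subset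
      rintro u ⟨n, rfl⟩
      exact ⟨⟨n, rfl⟩, hF1 (g n)⟩
    exact Set.infinite_range_of_injective hinj this
  · rintro ⟨L, hL⟩ e he
    apply Set.Finite.subset (Set.Finite.biUnion L.finite_toSet
      (fun s _ => he (above s) ⟨s, rfl⟩))
    rintro u ⟨hue, hue'⟩
    obtain ⟨s, hs⟩ := Set.mem_iUnion.mp (hL hue')
    obtain ⟨hsL, hus⟩ := Set.mem_iUnion.mp hs
    exact Set.mem_biUnion hsL ⟨hus, hue⟩

end Resource
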